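/- Let A be a (not necessarily unital) associative algebra satisfying, for all even permutations σ ∈ S_k (k ≥ 3), the identity a_1⋯a_k = a_{σ(1)}⋯a_{σ(k)}. If in addition A satisfies a_1⋯a_k = a_{ν(1)}⋯a_{ν(k)} for at least one odd permutation ν ∈ S_k, then A satisfies this identity for all permutations in S_k; otherwise A satisfies a_1⋯a_{k+1} = a_{τ(1)}⋯a_{τ(k+1)} for all τ ∈ S_{k+1}. -/

import Mathlib

/-- Product of a nonempty list in a (non-unital) multiplicative structure;
junk value `0` for the empty list. -/
def listMul {A : Type*} [Mul A] [Zero A] : List A → A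
  | [] => 0
  | [x] => x
  | x :: y :: l => x * listMul (y :: l)

/-- The product `a 0 * a 1 * ⋯ * a (k-1)`. -/
def finProd {A : Type*} [Mul A] [Zero A] {k : ℕ} (a : Fin k → A) : A :=
  listMul (List.ofFn a)

section
variable {A : Type*} [Mul A] [Zero A]

lemma listMul_cons (x : A) {l : List A} (h : l ≠ []) : listMul (x :: l) = x * listMul l := by
  cases l with
  | nil => exact absurd rfl h
  | cons y t => rfl

end

section
variable {A : Type*} [Semigroup A] [Zero A]

lemma listMul_merge (x y : A) (l : List A) : listMul (x :: y :: l) = listMul ((x * y) :: l) := by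
  cases l with
  | nil => rfl
  | cons z t =>
    show x * listMul (y :: z :: t) = (x * y) * listMul (z :: t)
    rw [show listMul (y :: z :: t) = y * listMul (z :: t) from rfl, mul_assoc]

lemma finProd_succ {n : ℕ} (hn : n ≠ 0) (a : Fin (n + 1) → A) :
    finProd a = a 0 * finProd (fun i => a i.succ) := by
  unfold finProd
  rw [List.ofFn_succ, listMul_cons]
  simpa using hn

end

lemma ofFn_expand3 {α : Type*} {m : ℕ} (f : Fin (m + 3) → α) :
    List.ofFn f = f ⟨0, by omega⟩ :: f ⟨1, by omega⟩ :: f ⟨2, by omega⟩ ::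
      List.ofFn (fun i : Fin m => f ⟨i.val + 3, by omega⟩) := by
  simp only [List.ofFn_succ]
  refine congrArg₂ List.cons (congrArg f (Fin.ext (by simp))) ?_
  refine congrArg₂ List.cons (congrArg f (Fin.ext (by simp))) ?_
  refine congrArg₂ List.cons (congrArg f (Fin.ext (by simp))) ?_
  exact congrArg List.ofFn (funext fun i => congrArg f (Fin.ext (by simp [Fin.val_succ]; try omega)))

lemma ofFn_expand4 {α : Type*} {m : ℕ} (f : Fin (m + 4) → α) :
    List.ofFn f = f ⟨0, by omega⟩ :: f ⟨1, by omega⟩ :: f ⟨2, by omega⟩ :: f ⟨3, by omega⟩ ::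
      List.ofFn (fun i : Fin m => f ⟨i.val + 4, by omega⟩) := by
  simp only [List.ofFn_succ]
  refine congrArg₂ List.cons (congrArg f (Fin.ext (by simp))) ?_
  refine congrArg₂ List.cons (congrArg f (Fin.ext (by simp))) ?_
  refine congrArg₂ List.cons (congrArg f (Fin.ext (by simp))) ?_
  refine congrArg₂ List.cons (congrArg f (Fin.ext (by simp))) ?_
  exact congrArg List.ofFn (funext fun i => congrArg f (Fin.ext (by simp [Fin.val_succ]; try omega)))

open Equiv Equiv.Perm

def IsValid (A : Type*) [Mul A] [Zero A] {n : ℕ} (τ : Equiv.Perm (Fin n)) : Prop :=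
  ∀ a : Fin n → A, finProd a = finProd (fun i => a (τ i))

section
variable {A : Type*} [Mul A] [Zero A] {n : ℕ}

lemma IsValid.mul {σ π : Equiv.Perm (Fin n)} (hσ : IsValid A σ) (hπ : IsValid A π) :
    IsValid A (σ * π) := fun a => by
  have h1 := hσ a
  have h2 := hπ (fun i => a (σ i))
  simp only [Equiv.Perm.mul_apply]
  exact h1.trans h2

lemma IsValid.one : IsValid A (1 : Equiv.Perm (Fin n)) := fun a => rfl

end

/-- every even permutation of `Fin (m+4)` fixing `0` is valid -/
lemma valid_of_even_fix_zero {A : Type*} [NonUnitalRing A] {m : ℕ}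
    (heven : ∀ σ : Equiv.Perm (Fin (m + 3)), Equiv.Perm.sign σ = 1 → IsValid A σ)
    (τ : Equiv.Perm (Fin (m + 4))) (hs : Equiv.Perm.sign τ = 1) (h0 : τ 0 = 0) :
    IsValid A τ := by
  rcases hp : Equiv.Perm.decomposeFin τ with ⟨p1, e⟩
  have hτ : τ = Equiv.Perm.decomposeFin.symm (p1, e) := by
    rw [← hp]; exact (Equiv.symm_apply_apply _ _).symm
  have hp1 : p1 = 0 := by
    rw [← h0, hτ, Equiv.Perm.decomposeFin_symm_apply_zero]
  subst hp1
  have hse : Equiv.Perm.sign e = 1 := by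
    rw [hτ, Equiv.Perm.decomposeFin.symm_sign, if_pos rfl, one_mul] at hs
    exact hs
  have he : IsValid A e := heven e hse
  intro a
  have hne : m + 3 ≠ 0 := by omega
  rw [finProd_succ hne, finProd_succ hne (fun i => a (τ i))]
  have hτ0 : τ 0 = 0 := h0
  have hτs : ∀ i : Fin (m + 3), τ i.succ = (e i).succ := by
    intro i
    rw [hτ, Equiv.Perm.decomposeFin_symm_apply_succ, Equiv.swap_self]
    rfl
  rw [hτ0]
  congr 1
  have := he (fun i => a i.succ)
  simp only [hτs]
  exact this

section
variable {A : Type*} [Semigroup A] [Zero A]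

lemma listMul_cons_merge (v x y : A) (l : List A) :
    listMul (v :: (x * y) :: l) = listMul (v :: x :: y :: l) := by
  rw [listMul_cons v (by simp), listMul_cons v (by simp), listMul_merge]

lemma listMul_cons_cons_merge (u v x y : A) (l : List A) :
    listMul (u :: v :: (x * y) :: l) = listMul (u :: v :: x :: y :: l) := by
  rw [listMul_cons u (by simp), listMul_cons u (by simp), listMul_cons_merge]

lemma merge_step {m : ℕ} (a : Fin (m + 4) → A) :
    finProd a = finProd (fun i : Fin (m + 3) =>
      if i.val = 0 then a ⟨0, by omega⟩ * a ⟨1, by omega⟩ else a ⟨i.val + 1, by omega⟩) := by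
  show listMul (List.ofFn a) = listMul (List.ofFn _)
  rw [ofFn_expand4 a, ofFn_expand3, listMul_merge]
  rfl

end

lemma key_perms {A : Type*} [NonUnitalRing A] {m : ℕ}
    (heven : ∀ σ : Equiv.Perm (Fin (m + 3)), Equiv.Perm.sign σ = 1 → IsValid A σ) :
    IsValid A (swap (⟨0, by omega⟩ : Fin (m + 4)) ⟨2, by omega⟩ * swap ⟨1, by omega⟩ ⟨3, by omega⟩) ∧
    IsValid A (swap (⟨0, by omega⟩ : Fin (m + 4)) ⟨3, by omega⟩ * swap ⟨3, by omega⟩ ⟨2, by omega⟩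
      * swap ⟨2, by omega⟩ ⟨1, by omega⟩) := by
  have l0 : (0:ℕ) < m + 3 := by omega
  have l1 : (1:ℕ) < m + 3 := by omega
  have l2 : (2:ℕ) < m + 3 := by omega
  have hσ : ∀ σ : Equiv.Perm (Fin (m + 3)), Equiv.Perm.sign σ = 1 →
      ∀ a : Fin (m + 4) → A, finProd a = finProd (fun i : Fin (m + 3) =>
        (fun j : Fin (m + 3) => if j.val = 0 then a ⟨0, by omega⟩ * a ⟨1, by omega⟩
          else a ⟨j.val + 1, by omega⟩) (σ i)) :=
    fun σ hs a => (merge_step a).trans (heven σ hs _)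
  have hne01 : (⟨0, l0⟩ : Fin (m + 3)) ≠ ⟨1, l1⟩ := by simp [Fin.ext_iff]
  have hne12 : (⟨1, l1⟩ : Fin (m + 3)) ≠ ⟨2, l2⟩ := by simp [Fin.ext_iff]
  have hs1 : Equiv.Perm.sign (swap (⟨0, l0⟩ : Fin (m + 3)) ⟨1, l1⟩ * swap ⟨1, l1⟩ ⟨2, l2⟩) = 1 := by
    rw [map_mul, Equiv.Perm.sign_swap hne01, Equiv.Perm.sign_swap hne12]; norm_num
  have hs2 : Equiv.Perm.sign (swap (⟨1, l1⟩ : Fin (m + 3)) ⟨2, l2⟩ * swap ⟨0, l0⟩ ⟨1, l1⟩) = 1 := by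
    rw [map_mul, Equiv.Perm.sign_swap hne12, Equiv.Perm.sign_swap hne01]; norm_num
  constructor
  · intro a
    have h := hσ _ hs1 a
    rw [h]
    show listMul (List.ofFn _) = listMul (List.ofFn _)
    rw [ofFn_expand3, ofFn_expand4]
    show listMul (a ⟨2, by omega⟩ :: a ⟨3, by omega⟩ ::
        (a ⟨0, by omega⟩ * a ⟨1, by omega⟩) :: List.ofFn fun i : Fin m => a ⟨i.val + 4, by omega⟩)
      = _
    rw [listMul_cons_cons_merge]
    rfl
  · intro a
    have h := hσ _ hs2 a
    rw [h]
    show listMul (List.ofFn _) = listMul (List.ofFn _)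
    rw [ofFn_expand3, ofFn_expand4]
    show listMul (a ⟨3, by omega⟩ :: (a ⟨0, by omega⟩ * a ⟨1, by omega⟩) ::
        a ⟨2, by omega⟩ :: List.ofFn fun i : Fin m => a ⟨i.val + 4, by omega⟩)
      = _
    rw [listMul_cons_merge]
    rfl

lemma all_valid_succ {A : Type*} [NonUnitalRing A] {m : ℕ}
    (heven : ∀ σ : Equiv.Perm (Fin (m + 3)), Equiv.Perm.sign σ = 1 → IsValid A σ) :
    ∀ τ : Equiv.Perm (Fin (m + 4)), IsValid A τ := by
  obtain ⟨hτ1, hν⟩ := key_perms (A := A) (m := m) heven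
  have l0 : (0:ℕ) < m + 4 := by omega
  have l1 : (1:ℕ) < m + 4 := by omega
  have l2 : (2:ℕ) < m + 4 := by omega
  have l3 : (3:ℕ) < m + 4 := by omega
  set τ1 : Equiv.Perm (Fin (m + 4)) :=
    swap (⟨0, by omega⟩ : Fin (m + 4)) ⟨2, by omega⟩ * swap ⟨1, by omega⟩ ⟨3, by omega⟩ with hτ1def
  set ν : Equiv.Perm (Fin (m + 4)) :=
    swap (⟨0, by omega⟩ : Fin (m + 4)) ⟨3, by omega⟩ * swap ⟨3, by omega⟩ ⟨2, by omega⟩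
      * swap ⟨2, by omega⟩ ⟨1, by omega⟩ with hνdef
  have hτ1sign : Equiv.Perm.sign τ1 = 1 := by
    rw [hτ1def, map_mul, Equiv.Perm.sign_swap (by simp [Fin.ext_iff]),
      Equiv.Perm.sign_swap (by simp [Fin.ext_iff])]
    norm_num
  have hνsign : Equiv.Perm.sign ν = -1 := by
    rw [hνdef, map_mul, map_mul, Equiv.Perm.sign_swap (by simp [Fin.ext_iff]),
      Equiv.Perm.sign_swap (by simp [Fin.ext_iff]), Equiv.Perm.sign_swap (by simp [Fin.ext_iff])]
    norm_num
  have hτ1at2 : τ1 ⟨2, l2⟩ = 0 := by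
    have : τ1 ⟨2, l2⟩ = ⟨0, l0⟩ := rfl
    rw [this]
    exact Fin.mk_zero
  have hfix := valid_of_even_fix_zero (A := A) heven
  have heven4 : ∀ τ : Equiv.Perm (Fin (m + 4)), Equiv.Perm.sign τ = 1 → IsValid A τ := by
    intro τ hs
    by_cases h0 : τ 0 = 0
    · exact hfix τ hs h0
    · have key : ∃ γ : Equiv.Perm (Fin (m + 4)),
          IsValid A γ ∧ Equiv.Perm.sign γ = 1 ∧ γ (τ⁻¹ 0) = 0 := by
        set j := τ⁻¹ 0 with hj
        have hj0 : j ≠ 0 := by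
          intro h
          apply h0
          have : τ (τ⁻¹ 0) = 0 := Equiv.apply_symm_apply τ 0
          rw [← hj, h] at this
          exact this
        rcases eq_or_ne j (⟨2, l2⟩ : Fin (m + 4)) with hj2 | hj2
        · exact ⟨τ1, hτ1, hτ1sign, by rw [hj2]; exact hτ1at2⟩
        · set x : Fin (m + 4) := if j = ⟨1, l1⟩ then ⟨3, l3⟩ else ⟨1, l1⟩ with hx
          have hx0 : x ≠ 0 := by
            rw [hx]; split <;> · intro h; rw [← Fin.mk_zero (n := m + 3)] at h
                                 simp [Fin.ext_iff] at h
          have hx2 : x ≠ ⟨2, l2⟩ := by rw [hx]; split <;> simp [Fin.ext_iff]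
          have hxj : x ≠ j := by
            rw [hx]; split
            · rename_i h; rw [h]; simp [Fin.ext_iff]
            · rename_i h; exact fun hc => h hc.symm
          set δ : Equiv.Perm (Fin (m + 4)) := swap j ⟨2, l2⟩ * swap ⟨2, l2⟩ x with hδ
          have hδj : δ j = ⟨2, l2⟩ := by
            rw [hδ]
            simp only [Equiv.Perm.mul_apply]
            rw [Equiv.swap_apply_of_ne_of_ne hj2 (Ne.symm hxj), Equiv.swap_apply_left]
          have hδ0 : δ 0 = 0 := by
            rw [hδ]
            simp only [Equiv.Perm.mul_apply]
            rw [Equiv.swap_apply_of_ne_of_ne (by rw [← Fin.mk_zero (n := m + 3)]; simp [Fin.ext_iff])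
              (Ne.symm hx0),
              Equiv.swap_apply_of_ne_of_ne (Ne.symm hj0) (by rw [← Fin.mk_zero (n := m + 3)]; simp [Fin.ext_iff])]
          have hδsign : Equiv.Perm.sign δ = 1 := by
            rw [hδ, map_mul, Equiv.Perm.sign_swap hj2, Equiv.Perm.sign_swap (Ne.symm hx2)]
            norm_num
          refine ⟨τ1 * δ, hτ1.mul (hfix δ hδsign hδ0), ?_, ?_⟩
          · rw [map_mul, hτ1sign, hδsign]; norm_num
          · rw [Equiv.Perm.mul_apply, hδj, hτ1at2]
      obtain ⟨γ, hγval, hγsign, hγj⟩ := key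
      have hγinv : γ⁻¹ 0 = τ⁻¹ 0 := by
        conv_lhs => rw [← hγj]
        exact Equiv.symm_apply_apply γ _
      have h1 : (τ * γ⁻¹) 0 = 0 := by
        rw [Equiv.Perm.mul_apply, hγinv]; exact Equiv.apply_symm_apply τ 0
      have hsign1 : Equiv.Perm.sign (τ * γ⁻¹) = 1 := by
        rw [map_mul, map_inv, hγsign, hs]; norm_num
      have h2 := hfix _ hsign1 h1
      have hdec : τ = (τ * γ⁻¹) * γ := by rw [inv_mul_cancel_right]
      rw [hdec]
      exact h2.mul hγval
  intro τ
  rcases Int.units_eq_one_or (Equiv.Perm.sign τ) with hs | hs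
  · exact heven4 τ hs
  · have hsign2 : Equiv.Perm.sign (ν⁻¹ * τ) = 1 := by
      rw [map_mul, map_inv, hνsign, hs]; decide
    have h2 := heven4 _ hsign2
    have hdec : τ = ν * (ν⁻¹ * τ) := (mul_inv_cancel_left ν τ).symm
    rw [hdec]
    exact hν.mul h2

theorem even_perms_plus_one_odd {F A : Type*} [Field F] [NonUnitalRing A] [Module F A]
    [SMulCommClass F A A] [IsScalarTower F A A]
    (k : ℕ) (hk : 3 ≤ k)
    (heven : ∀ σ : Equiv.Perm (Fin k), Equiv.Perm.sign σ = 1 →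
      ∀ a : Fin k → A, finProd a = finProd (fun i => a (σ i))) :
    ((∃ ν : Equiv.Perm (Fin k), Equiv.Perm.sign ν = -1 ∧
        ∀ a : Fin k → A, finProd a = finProd (fun i => a (ν i))) →
      ∀ τ : Equiv.Perm (Fin k), ∀ a : Fin k → A,
        finProd a = finProd (fun i => a (τ i))) ∧
    ((¬∃ ν : Equiv.Perm (Fin k), Equiv.Perm.sign ν = -1 ∧
        ∀ a : Fin k → A, finProd a = finProd (fun i => a (ν i))) →
      ∀ τ : Equiv.Perm (Fin (k + 1)), ∀ a : Fin (k + 1) → A,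
        finProd a = finProd (fun i => a (τ i))) := by
  obtain ⟨m, rfl⟩ : ∃ m, k = m + 3 := ⟨k - 3, by omega⟩
  constructor
  · rintro ⟨ν, hsν, hν⟩ τ a
    rcases Int.units_eq_one_or (Equiv.Perm.sign τ) with hs | hs
    · exact heven τ hs a
    · have hsign2 : Equiv.Perm.sign (ν⁻¹ * τ) = 1 := by
        rw [map_mul, map_inv, hsν, hs]; decide
      have h2 : IsValid A (ν⁻¹ * τ) := heven _ hsign2
      have hνv : IsValid A ν := hν
      have := (hνv.mul h2) a
      refine this.trans ?_
      rw [mul_inv_cancel_left]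
  · intro _ τ a
    exact all_valid_succ (fun σ hσ => heven σ hσ) τ a
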